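/- arXiv:2205.11724 — 12 statements merged into one kernel-verified Lean document; each statement's English description precedes it below -/
import Mathlib

section
/- If R is a Nil*-Noetherian commutative ring and I is a nil ideal of R, then the quotient ring R/I is Nil*-Noetherian. -/
/-- A commutative ring is Nil*-Noetherian if every nil ideal is finitely generated. -/
def IsNilStarNoetherianRing (R : Type*) [CommRing R] : Prop :=
  ∀ I : Ideal R, I ≤ nilradical R → I.FG

theorem isNilStarNoetherianRing_quotient (R : Type*) [CommRing R]
    (hR : IsNilStarNoetherianRing R) (I : Ideal R) (hI : I ≤ nilradical R) :
    IsNilStarNoetherianRing (R ⧸ I) := by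
  intro J hJ
  set f := Ideal.Quotient.mk I
  have hK : J.comap f ≤ nilradical R := by
    intro x hx
    have hnil : IsNilpotent (f x) := hJ hx
    obtain ⟨n, hn⟩ := hnil
    have : x ^ n ∈ I := by
      rwa [← map_pow, Ideal.Quotient.eq_zero_iff_mem] at hn
    have : IsNilpotent (x ^ n) := hI this
    exact this.of_pow
  have hfg : (J.comap f).FG := hR _ hK
  have : (J.comap f).map f = J :=
    Ideal.map_comap_of_surjective f Ideal.Quotient.mk_surjective J
  rw [← this]
  exact Ideal.FG.map hfg f
end

section
/- A finite direct product of rings R = R₁ × ⋯ × Rₙ is Nil*-Noetherian if and only if each Rᵢ is Nil*-Noetherian. -/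
open Ideal in
lemma pi_ideal_fg_of_map_fg {ι : Type*} [Fintype ι] (R : ι → Type*) [∀ i, CommRing (R i)]
    (I : Ideal (∀ i, R i)) (h : ∀ i, (I.map (Pi.evalRingHom R i)).FG) : I.FG := by
  classical
  choose s hs using h
  refine ⟨Finset.univ.biUnion (fun i => (s i).image (fun a => Pi.single i a)), le_antisymm ?_ ?_⟩
  · rw [Ideal.span_le]
    intro g hg
    simp only [Finset.coe_biUnion, Finset.coe_image, Set.mem_iUnion, Set.mem_image,
      Finset.mem_coe] at hg
    obtain ⟨i, -, a, ha, rfl⟩ := hg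
    have hamem : a ∈ I.map (Pi.evalRingHom R i) := by
      rw [← hs i]; exact Ideal.subset_span ha
    obtain ⟨y, hy, rfl⟩ := (Ideal.mem_map_iff_of_surjective _
      (Function.surjective_eval i)).mp hamem
    have : Pi.single i (y i) = Pi.single i (1 : R i) * y := by
      funext j
      by_cases hji : j = i
      · subst hji; simp
      · simp [Pi.single_apply, hji]
    show Pi.single i (y i) ∈ I
    rw [this]
    exact I.mul_mem_left _ hy
  · intro x hx
    have hxsum : x = ∑ i, Pi.single i (x i) := by
      rw [Finset.univ_sum_single]
    rw [hxsum]
    apply Submodule.sum_mem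
    intro i _
    have hxi : x i ∈ I.map (Pi.evalRingHom R i) := Ideal.mem_map_of_mem _ hx
    rw [← hs i] at hxi
    set S : Ideal (∀ i, R i) := Ideal.span
      (Finset.univ.biUnion (fun i => (s i).image (fun a => Pi.single i a)) : Finset (∀ i, R i))
    refine Submodule.span_induction (p := fun a _ => Pi.single i a ∈ S) ?_ ?_ ?_ ?_ hxi
    · intro a ha
      apply Ideal.subset_span
      simp only [Finset.coe_biUnion, Finset.coe_image, Set.mem_iUnion, Set.mem_image,
        Finset.mem_coe]
      exact ⟨i, Finset.mem_univ i, a, ha, rfl⟩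
    · simp
    · intro a b _ _ hA hB
      rw [Pi.single_add]
      exact S.add_mem hA hB
    · intro c a _ hA
      have : Pi.single i (c • a) = Pi.single i c * Pi.single i a := by
        funext j
        by_cases hji : j = i
        · subst hji; simp
        · simp [Pi.single_apply, hji]
      rw [this]
      exact S.mul_mem_left _ hA

theorem isNilStarNoetherianRing_pi_iff {ι : Type*} [Fintype ι]
    (R : ι → Type*) [∀ i, CommRing (R i)] :
    IsNilStarNoetherianRing (∀ i, R i) ↔ ∀ i, IsNilStarNoetherianRing (R i) := by
  classical
  constructor
  · intro h i I hI
    set π := Pi.evalRingHom R i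
    set J : Ideal (∀ j, R j) :=
      Ideal.comap π I ⊓ ⨅ j ∈ ({i} : Set ι)ᶜ, RingHom.ker (Pi.evalRingHom R j) with hJ
    have hmem : ∀ x, x ∈ J ↔ x i ∈ I ∧ ∀ j, j ≠ i → x j = 0 := by
      intro x
      simp only [hJ, Ideal.mem_inf, Ideal.mem_comap, Ideal.mem_iInf, RingHom.mem_ker,
        Set.mem_compl_iff, Set.mem_singleton_iff]
      constructor
      · rintro ⟨h1, h2⟩; exact ⟨h1, fun j hj => h2 j hj⟩
      · rintro ⟨h1, h2⟩; exact ⟨h1, fun j hj => h2 j hj⟩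
    have hnil : J ≤ nilradical (∀ j, R j) := by
      intro x hx
      rw [hmem] at hx
      obtain ⟨n, hn⟩ := hI hx.1
      refine ⟨n + 1, funext fun j => ?_⟩
      by_cases hji : j = i
      · subst hji
        show (x j) ^ (n + 1) = 0
        rw [pow_succ, hn, zero_mul]
      · show (x j) ^ (n + 1) = 0
        rw [hx.2 j hji, zero_pow (Nat.succ_ne_zero n)]
    have hJfg : J.FG := h J hnil
    have hmap : J.map π = I := by
      apply le_antisymm
      · rw [Ideal.map_le_iff_le_comap]
        exact inf_le_left
      · intro a ha
        have hsingle : Pi.single i a ∈ J := by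
          rw [hmem]
          constructor
          · simpa using ha
          · intro j hj; simp [Pi.single_apply, hj]
        have hmm := Ideal.mem_map_of_mem π hsingle
        have hpa : π (Pi.single i a) = a := by simp [π]
        rwa [hpa] at hmm
    rw [← hmap]
    exact Ideal.FG.map hJfg π
  · intro h I hI
    apply pi_ideal_fg_of_map_fg
    intro i
    apply h i
    rw [Ideal.map_le_iff_le_comap]
    intro x hx
    have : IsNilpotent x := hI hx
    exact this.map (Pi.evalRingHom R i)
end

section
/- Let φ : R → S be a ring homomorphism making R a module retract of S, i.e., there exists an R-module homomorphism ψ : S → R with ψ ∘ φ = id_R (viewing S as an R-module via φ). If S is Nil*-Noetherian, then R is Nil*-Noetherian. -/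
theorem isNilStarNoetherianRing_of_moduleRetract {R S : Type*} [CommRing R] [CommRing S]
    (φ : R →+* S) (ψ : S →+ R)
    (hlin : ∀ (r : R) (s : S), ψ (φ r * s) = r * ψ s)
    (hretract : ∀ r : R, ψ (φ r) = r)
    (hS : IsNilStarNoetherianRing S) : IsNilStarNoetherianRing R := by
  classical
  intro I hI
  set J : Ideal S := Ideal.span (φ '' ↑I) with hJdef
  have hJnil : J ≤ nilradical S := by
    rw [hJdef, Ideal.span_le]
    rintro _ ⟨x, hx, rfl⟩
    exact mem_nilradical.mpr ((mem_nilradical.mp (hI hx)).map φ)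
  obtain ⟨T, hT⟩ := hS J hJnil
  have hTJ : ∀ t ∈ T, ∃ U : Finset S, ↑U ⊆ φ '' ↑I ∧ t ∈ Ideal.span (U : Set S) := by
    intro t ht
    have : t ∈ J := hT ▸ Ideal.subset_span ht
    exact Submodule.mem_span_finite_of_mem_span this
  choose U hU1 hU2 using hTJ
  let V : Finset S := T.attach.biUnion (fun t => U t t.2)
  have hV1 : (V : Set S) ⊆ φ '' ↑I := by
    intro s hs
    simp only [V, Finset.coe_biUnion, Set.mem_iUnion] at hs
    obtain ⟨t, ht, hst⟩ := hs
    exact hU1 t t.2 hst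
  have hVspan : J = Ideal.span (V : Set S) := by
    apply le_antisymm
    · rw [← hT, Ideal.span_le]
      intro t ht
      refine Ideal.span_mono ?_ (hU2 t ht)
      intro s hs
      simp only [V, Finset.coe_biUnion, Set.mem_iUnion]
      exact ⟨⟨t, ht⟩, Finset.mem_attach _ _, hs⟩
    · rw [hJdef, Ideal.span_le]
      exact fun s hs => Ideal.subset_span (hV1 hs)
  choose! g hg1 hg2 using fun s (hs : s ∈ (V : Set S)) => hV1 hs
  let W : Finset R := V.image g
  refine ⟨W, ?_⟩
  apply le_antisymm
  · rw [Ideal.span_le]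
    intro r hr
    simp only [W, Finset.coe_image, Set.mem_image] at hr
    obtain ⟨s, hs, rfl⟩ := hr
    exact hg1 s hs
  · intro x hx
    have hφx : φ x ∈ Ideal.span (V : Set S) := by
      rw [← hVspan]
      exact Ideal.subset_span ⟨x, hx, rfl⟩
    have key : ∀ y ∈ Ideal.span (V : Set S), ∀ s : S,
        ψ (s * y) ∈ Ideal.span (W : Set R) := by
      intro y hy
      refine Submodule.span_induction ?_ ?_ ?_ ?_ hy
      · intro v hv s
        have : ψ (s * v) = g v * ψ s := by
          rw [show s * v = φ (g v) * s by rw [hg2 v hv, mul_comm], hlin]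
        rw [this]
        exact Ideal.mul_mem_right _ _ (Ideal.subset_span
          (by simp only [W, Finset.coe_image]; exact Set.mem_image_of_mem g hv))
      · intro s; simp
      · intro y z _ _ hy hz s
        rw [mul_add, map_add]
        exact add_mem (hy s) (hz s)
      · intro c y _ hy s
        have : s * (c • y) = (s * c) * y := by
          simp [smul_eq_mul]; ring
        rw [this]
        exact hy (s * c)
    have := key (φ x) hφx 1
    simpa [hretract] using this
end

section
/- A commutative ring R is Nil*-Noetherian if and only if the polynomial ring R[x] is Nil*-Noetherian. -/
open Polynomial

private lemma key {S : Type*} [CommRing S] (A I : Ideal S)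
    (hann : ∀ a ∈ A, ∀ x ∈ I, a * x = 0)
    (hNoeth : IsNoetherianRing (S ⧸ A)) (hI : I.FG)
    (J : Ideal S) (hJ : J ≤ I) : J.FG := by
  classical
  have htors : Module.IsTorsionBySet S ↥I (A : Set S) := by
    intro x a
    exact Subtype.ext (hann a a.2 x x.2)
  letI : Module (S ⧸ A) ↥I := htors.module
  haveI : IsScalarTower S (S ⧸ A) ↥I := htors.isScalarTower
  haveI : Module.Finite S ↥I := Module.Finite.iff_fg.mpr hI
  haveI : Module.Finite (S ⧸ A) ↥I := Module.Finite.of_restrictScalars_finite S (S ⧸ A) ↥I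
  haveI : IsNoetherian (S ⧸ A) ↥I :=
    isNoetherian_of_isNoetherianRing_of_finite (S ⧸ A) ↥I
  have hsm : ∀ (s : S) (x : ↥I), ((Ideal.Quotient.mk A s • x : ↥I) : S) = s * (x : S) := by
    intro s x
    rw [htors.mk_smul]
    rfl
  set J' : Submodule (S ⧸ A) ↥I :=
    { carrier := {x : ↥I | (x : S) ∈ J}
      add_mem' := fun hx hy => J.add_mem hx hy
      zero_mem' := J.zero_mem
      smul_mem' := by
        rintro c x hx
        obtain ⟨s, rfl⟩ := Ideal.Quotient.mk_surjective c
        show ((Ideal.Quotient.mk A s • x : ↥I) : S) ∈ J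
        rw [hsm]
        exact J.mul_mem_left s hx } with hJ'def
  obtain ⟨T, hT⟩ := IsNoetherian.noetherian J'
  refine ⟨T.image (fun x : ↥I => (x : S)), le_antisymm ?_ ?_⟩
  · rw [Ideal.span_le]
    intro y hy
    simp only [Finset.coe_image, Set.mem_image, Finset.mem_coe] at hy
    obtain ⟨x, hxT, rfl⟩ := hy
    have : x ∈ J' := hT ▸ Submodule.subset_span hxT
    exact this
  · intro y hy
    have hy' : (⟨y, hJ hy⟩ : ↥I) ∈ J' := hy
    rw [← hT] at hy'
    have : ∀ x : ↥I, x ∈ Submodule.span (S ⧸ A) (T : Set ↥I) →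
        (x : S) ∈ Ideal.span ((T.image (fun x : ↥I => (x : S)) : Finset S) : Set S) := by
      intro x hx
      induction hx using Submodule.span_induction with
      | mem z hz => exact Ideal.subset_span (by simp only [Finset.coe_image]; exact ⟨z, hz, rfl⟩)
      | zero => simp
      | add a b _ _ ha hb => exact Ideal.add_mem _ ha hb
      | smul c a _ ha =>
        obtain ⟨s, rfl⟩ := Ideal.Quotient.mk_surjective c
        rw [show ((Ideal.Quotient.mk A s • a : ↥I) : S) = s * (a : S) from hsm s a]
        exact Ideal.mul_mem_left _ s ha
    exact this _ hy'

private lemma nilradical_polynomial (R : Type*) [CommRing R] :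
    nilradical R[X] = (nilradical R).map (C : R →+* R[X]) := by
  ext f
  simp only [mem_nilradical, Polynomial.isNilpotent_iff, Ideal.mem_map_C_iff,
    mem_nilradical]

theorem isNilStarNoetherianRing_polynomial_iff (R : Type*) [CommRing R] :
    IsNilStarNoetherianRing R ↔ IsNilStarNoetherianRing (Polynomial R) := by
  constructor
  · intro h J hJ
    -- N : nilradical of R
    set N : Ideal R := nilradical R with hN
    have hNfg : N.FG := h N le_rfl
    -- N is a Noetherian R-module
    haveI hNoethN : IsNoetherian R ↥N := by
      rw [isNoetherian_def]
      intro p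
      have hmap : (p.map N.subtype).FG := by
        refine h (p.map N.subtype) ?_
        intro x hx
        obtain ⟨⟨y, hy⟩, _, rfl⟩ := hx
        exact hy
      exact Submodule.fg_of_fg_map_injective N.subtype Subtype.coe_injective hmap
    -- the annihilator of N
    set A : Ideal R := (N : Submodule R R).annihilator with hA
    -- R ⧸ A embeds in a finite power of N
    obtain ⟨s, hs⟩ := hNfg
    have hsN : ∀ i : {x : R // x ∈ s}, (i : R) ∈ N := fun i => hs ▸ Ideal.subset_span i.2
    let φ : R →ₗ[R] (({x : R // x ∈ s}) → ↥N) :=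
      LinearMap.pi fun i =>
        { toFun := fun r => ⟨r * i, N.mul_mem_left r (hsN i)⟩
          map_add' := fun a b => Subtype.ext (add_mul a b i)
          map_smul' := fun c a => Subtype.ext (by simp [mul_assoc]) }
    have hker : LinearMap.ker φ = A := by
      ext r
      simp only [LinearMap.mem_ker, hA, Submodule.mem_annihilator]
      constructor
      · intro hr n hn
        rw [← hs] at hn
        induction hn using Submodule.span_induction with
        | mem z hz =>
          exact Subtype.ext_iff.mp (congrFun hr ⟨z, hz⟩)
        | zero => simp
        | add a b _ _ ha hb => rw [smul_add, ha, hb, add_zero]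
        | smul c a _ ha =>
          rw [smul_comm, ha, smul_zero]
      · intro hr
        funext i
        exact Subtype.ext (hr i (hsN i))
    have hAle : A ≤ LinearMap.ker φ := le_of_eq hker.symm
    let φ' : (R ⧸ A) →ₗ[R] (({x : R // x ∈ s}) → ↥N) := Submodule.liftQ A φ hAle
    have hφ'inj : Function.Injective φ' := by
      rw [← LinearMap.ker_eq_bot, Submodule.ker_liftQ_eq_bot A φ hAle (le_of_eq hker)]
    haveI : Finite {x : R // x ∈ s} := Finite.of_fintype _
    haveI : IsNoetherian R (R ⧸ A) := isNoetherian_of_injective φ' hφ'inj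
    haveI : IsNoetherianRing (R ⧸ A) := isNoetherian_of_tower R this
    haveI : IsNoetherianRing ((R ⧸ A)[X]) := Polynomial.isNoetherianRing
    have hQ : IsNoetherianRing (R[X] ⧸ (A.map (C : R →+* R[X]))) :=
      isNoetherianRing_of_ringEquiv _ (Ideal.polynomialQuotientEquivQuotientPolynomial A)
    -- the annihilation property in R[X]
    have hann : ∀ a ∈ A.map (C : R →+* R[X]), ∀ f ∈ nilradical R[X], a * f = 0 := by
      have hle : A.map (C : R →+* R[X]) ≤ (nilradical R[X] : Submodule R[X] R[X]).annihilator := by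
        rw [Ideal.map_le_iff_le_comap]
        intro a ha
        rw [Ideal.mem_comap, Submodule.mem_annihilator]
        intro f hf
        show C a * f = 0
        ext n
        rw [Polynomial.coeff_C_mul, Polynomial.coeff_zero]
        have hfn : f.coeff n ∈ N := (Polynomial.isNilpotent_iff.mp (mem_nilradical.mp hf)) n
        exact Submodule.mem_annihilator.mp ha _ hfn
      intro a ha f hf
      exact Submodule.mem_annihilator.mp (hle ha) f hf
    -- nilradical R[X] is finitely generated
    have hfgnil : (nilradical R[X]).FG := by
      rw [nilradical_polynomial]
      exact Ideal.FG.map ⟨s, hs⟩ _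
    exact key (A.map (C : R →+* R[X])) (nilradical R[X]) hann hQ hfgnil J hJ
  · intro h I hI
    have h1 : I.map (C : R →+* R[X]) ≤ nilradical R[X] := by
      rw [Ideal.map_le_iff_le_comap]
      intro a ha
      rw [Ideal.mem_comap, mem_nilradical]
      exact (mem_nilradical.mp (hI ha)).map C
    have h2 : (I.map (C : R →+* R[X])).FG := h _ h1
    have h3 : (I.map (C : R →+* R[X])).map (evalRingHom (0 : R)) = I := by
      rw [Ideal.map_map, show (evalRingHom (0 : R)).comp (C : R →+* R[X]) = RingHom.id R from
        by ext a; simp, Ideal.map_id]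
    rw [← h3]
    exact Ideal.FG.map h2 _
end

section
/- If the polynomial ring R[x] is Nil*-Noetherian, then R is Nil*-Noetherian. -/
theorem isNilStarNoetherianRing_of_polynomial (R : Type*) [CommRing R]
    (h : IsNilStarNoetherianRing (Polynomial R)) : IsNilStarNoetherianRing R := by
  intro I hI
  have h1 : (I.map (Polynomial.C : R →+* Polynomial R)) ≤ nilradical (Polynomial R) := by
    rw [Ideal.map_le_iff_le_comap]
    intro a ha
    exact Polynomial.isNilpotent_C_iff.mpr (hI ha)
  have h2 := h _ h1
  have h3 := h2.map (Polynomial.constantCoeff : Polynomial R →+* R)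
  rwa [Ideal.map_map, show (Polynomial.constantCoeff : Polynomial R →+* R).comp (Polynomial.C : R →+* Polynomial R) = RingHom.id R from by ext; simp, Ideal.map_id] at h3
end

section
/- If the formal power series ring R[[x]] is Nil*-Noetherian, then R is Nil*-Noetherian. -/
theorem isNilStarNoetherianRing_of_powerSeries (R : Type*) [CommRing R]
    (h : IsNilStarNoetherianRing (PowerSeries R)) : IsNilStarNoetherianRing R := by
  intro I hI
  have hJ : I.map (PowerSeries.C (R := R)) ≤ nilradical (PowerSeries R) := by
    rw [Ideal.map_le_iff_le_comap]
    intro a ha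
    exact (mem_nilradical.mp (hI ha)).map (PowerSeries.C (R := R))
  have hfg := (h _ hJ).map (PowerSeries.constantCoeff (R := R))
  rw [Ideal.map_map] at hfg
  have hc : (PowerSeries.constantCoeff (R := R)).comp (PowerSeries.C (R := R)) = RingHom.id R := by
    ext a; simp
  rwa [hc, Ideal.map_id] at hfg
end

section
/- A commutative ring R is Nil*-Noetherian if and only if the formal power series ring R[[x]] is Nil*-Noetherian. -/
open PowerSeries

section NilpotentCoeff
variable {R : Type*} [CommRing R]

lemma isNilpotent_coeff_of_isNilpotent {f : R⟦X⟧} (hf : IsNilpotent f) (i : ℕ) :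
    IsNilpotent (PowerSeries.coeff i f) := by
  induction i generalizing f with
  | zero =>
    obtain ⟨n, hn⟩ := hf
    exact ⟨n, by rw [coeff_zero_eq_constantCoeff, ← map_pow, hn, map_zero]⟩
  | succ i ih =>
    have hc : IsNilpotent ((C) ((constantCoeff) f)) :=
      (hf.map (constantCoeff)).map (C)
    have h1 : IsNilpotent ((X : R⟦X⟧) * mk fun p => coeff (p + 1) f) := by
      have h2 := (Commute.all f (C ((constantCoeff) f))).isNilpotent_sub hf hc
      have h3 : f - C ((constantCoeff) f) = X * mk fun p => coeff (p + 1) f := by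
        rw [sub_eq_iff_eq_add]
        exact eq_X_mul_shift_add_const f
      rwa [h3] at h2
    obtain ⟨n, hn⟩ := h1
    have h4 : IsNilpotent (mk fun p => coeff (p + 1) f : R⟦X⟧) := by
      refine ⟨n, ?_⟩
      ext j
      rw [mul_pow] at hn
      have := congrArg (coeff (j + n)) hn
      rwa [coeff_X_pow_mul, map_zero] at this
    simpa using ih h4

end NilpotentCoeff

section HilbertBasis
open Finset

variable {S : Type*} [CommRing S]

/-- Truncation: the coefficient of degree `d` of `mk c * g` only depends on the first
`K > d` coefficients of `mk c`. -/
lemma coeff_mk_mul_eq_sum (c : ℕ → S) (g : S⟦X⟧) {d K : ℕ} (hdK : d < K) :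
    coeff d (mk c * g) = ∑ k ∈ range K, coeff d (C (c k) * X ^ k * g) := by
  have h1 : ∀ k, coeff d (C (c k) * X ^ k * g)
      = c k * (if k ≤ d then coeff (d - k) g else 0) := by
    intro k
    rw [mul_assoc, coeff_C_mul, coeff_X_pow_mul']
  simp only [h1]
  rw [← Finset.sum_subset (Finset.range_subset_range.mpr hdK)
    (fun k _ hk => by
      rw [Finset.mem_range, not_lt] at hk
      rw [if_neg (by omega), mul_zero])]
  rw [coeff_mul, Finset.Nat.sum_antidiagonal_eq_sum_range_succ_mk]
  apply Finset.sum_congr rfl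
  intro k hk
  rw [Finset.mem_range] at hk
  rw [coeff_mk, if_pos (by omega)]

theorem PowerSeries.isNoetherianRing_of_isNoetherianRing [IsNoetherianRing S] :
    IsNoetherianRing S⟦X⟧ := by
  rw [isNoetherianRing_iff, isNoetherian_def]
  intro I
  -- the filtration by order
  set Ofilt : ℕ → Submodule S S⟦X⟧ := fun n =>
    I.restrictScalars S ⊓ ⨅ i ∈ Finset.range n, LinearMap.ker (coeff i) with hOfilt
  have hOf : ∀ n (f : S⟦X⟧), f ∈ Ofilt n ↔ f ∈ I ∧ ∀ i < n, coeff i f = 0 := by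
    intro n f
    simp [hOfilt, Submodule.mem_inf, Submodule.mem_iInf, LinearMap.mem_ker]
  -- the leading coefficient ideals
  set J : ℕ → Ideal S := fun n => (Ofilt n).map (coeff n) with hJ
  have hJmono : Monotone J := by
    apply monotone_nat_of_le_succ
    intro n x hx
    obtain ⟨f, hf, hfx⟩ := Submodule.mem_map.mp hx
    rw [hOf] at hf
    refine Submodule.mem_map.mpr ⟨X * f, ?_, ?_⟩
    · rw [hOf]
      refine ⟨Ideal.mul_mem_left I X hf.1, ?_⟩
      intro i hi
      match i with
      | 0 => simp
      | (j+1) => rw [coeff_succ_X_mul]; exact hf.2 j (by omega)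
    · rw [coeff_succ_X_mul]; exact hfx
  -- stabilization
  obtain ⟨m₀, hm₀⟩ := (monotone_stabilizes_iff_noetherian.mpr inferInstance) ⟨J, hJmono⟩
  -- generators of each J n
  choose T hT using fun n => IsNoetherian.noetherian (J n)
  -- witnesses
  have hwex : ∀ n (a : S), a ∈ J n → ∃ f, f ∈ Ofilt n ∧ coeff n f = a := by
    intro n a ha
    obtain ⟨f, hf, hfa⟩ := Submodule.mem_map.mp ha
    exact ⟨f, hf, hfa⟩
  classical
  set w : ℕ → S → S⟦X⟧ := fun n a => if h : a ∈ J n then (hwex n a h).choose else 0 with hwdef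
  have hwspec : ∀ n (a : S), a ∈ J n →
      w n a ∈ I ∧ (∀ i < n, coeff i (w n a) = 0) ∧ coeff n (w n a) = a := by
    intro n a ha
    have h := (hwex n a ha).choose_spec
    rw [hOf] at h
    simp only [hwdef, dif_pos ha]
    exact ⟨h.1.1, h.1.2, h.2⟩
  have hTmem : ∀ n, ∀ a ∈ T n, a ∈ J n := fun n a ha => (hT n) ▸ Submodule.subset_span ha
  -- the generating set
  set G : Set S⟦X⟧ := ⋃ n ∈ Finset.range (m₀ + 1), (w n) '' (T n : Set S) with hG
  have hGfin : G.Finite :=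
    Set.Finite.biUnion (Finset.range (m₀ + 1)).finite_toSet
      (fun n _ => Set.Finite.image _ (T n).finite_toSet)
  have hGI : ∀ g ∈ G, g ∈ I := by
    intro g hg
    rw [hG] at hg
    simp only [Set.mem_iUnion, Set.mem_image] at hg
    obtain ⟨n, -, a, ha, rfl⟩ := hg
    exact (hwspec n a (hTmem n a ha)).1
  have hGmem : ∀ n, n ≤ m₀ → ∀ a ∈ T n, w n a ∈ Ideal.span G := by
    intro n hn a ha
    apply Ideal.subset_span
    rw [hG]
    simp only [Set.mem_iUnion, Set.mem_image]
    exact ⟨n, Finset.mem_range.mpr (by omega), a, ha, rfl⟩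
  -- Phase 2 : elements of order ≥ m₀ lie in the span
  have phase2 : ∀ r ∈ Ofilt m₀, r ∈ Ideal.span G := by
    intro r hr
    set t := T m₀ with ht
    set pick : ℕ → S⟦X⟧ → S → S := fun n ρ =>
      if h : coeff n ρ ∈ Submodule.span S (t : Set S) then (Submodule.mem_span_finset.mp h).choose
      else fun _ => 0 with hpickdef
    have hpickspec : ∀ n (ρ : S⟦X⟧), coeff n ρ ∈ Submodule.span S (t : Set S) →
        ∑ a ∈ t, pick n ρ a • a = coeff n ρ := by
      intro n ρ h
      simp only [hpickdef, dif_pos h]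
      exact (Submodule.mem_span_finset.mp h).choose_spec.2
    set ρseq : ℕ → S⟦X⟧ := fun k => Nat.rec r
      (fun k ρ => ρ - ∑ a ∈ t, C (pick (m₀ + k) ρ a) * X ^ k * w m₀ a) k with hρdef
    have hρ0 : ρseq 0 = r := rfl
    have hρsucc : ∀ k, ρseq (k+1)
        = ρseq k - ∑ a ∈ t, C (pick (m₀ + k) (ρseq k) a) * X ^ k * w m₀ a := fun k => rfl
    have hJeq : ∀ m, m₀ ≤ m → J m₀ = J m := fun m hm => hm₀ m hm
    have hinv : ∀ k, ρseq k ∈ Ofilt (m₀ + k) := by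
      intro k
      induction k with
      | zero => simpa [hρ0] using hr
      | succ k ih =>
        have hmemJ : coeff (m₀ + k) (ρseq k) ∈ J (m₀ + k) :=
          Submodule.mem_map_of_mem ih
        have hmemt : coeff (m₀ + k) (ρseq k) ∈ Submodule.span S (t : Set S) := by
          rw [ht, hT m₀, hJeq (m₀ + k) (by omega)]
          exact hmemJ
        rw [hOf]
        constructor
        · rw [hρsucc]
          refine Submodule.sub_mem I ((hOf _ _).mp ih).1 (Ideal.sum_mem I fun a ha => ?_)
          exact Ideal.mul_mem_left I _ ((hwspec m₀ a (hTmem m₀ a (ht ▸ ha))).1)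
        · intro i hi
          have hterm : ∀ a ∈ t, coeff i (C (pick (m₀ + k) (ρseq k) a) * X ^ k * w m₀ a)
              = pick (m₀ + k) (ρseq k) a * (if k ≤ i then coeff (i - k) (w m₀ a) else 0) :=
            fun a _ => by rw [mul_assoc, coeff_C_mul, coeff_X_pow_mul']
          rw [hρsucc, map_sub, map_sum, Finset.sum_congr rfl hterm]
          rcases Nat.lt_or_ge i (m₀ + k) with hik | hik
          · rw [((hOf _ _).mp ih).2 i hik, Finset.sum_eq_zero, sub_zero]
            intro a ha
            by_cases hki : k ≤ i
            · rw [if_pos hki, (hwspec m₀ a (hTmem m₀ a (ht ▸ ha))).2.1 (i - k) (by omega),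
                mul_zero]
            · rw [if_neg hki, mul_zero]
          · have hieq : i = m₀ + k := by omega
            subst hieq
            rw [sub_eq_zero, ← hpickspec _ _ hmemt]
            refine Finset.sum_congr rfl fun a ha => ?_
            rw [if_pos (by omega : k ≤ m₀ + k), smul_eq_mul]
            congr 1
            rw [(by omega : m₀ + k - k = m₀), (hwspec m₀ a (hTmem m₀ a (ht ▸ ha))).2.2]
    have htel : ∀ K, r - ρseq K
        = ∑ k ∈ Finset.range K, ∑ a ∈ t, C (pick (m₀ + k) (ρseq k) a) * X ^ k * w m₀ a := by
      intro K
      induction K with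
      | zero => simp [hρ0]
      | succ K ihK =>
        rw [Finset.sum_range_succ, ← ihK, hρsucc]
        ring
    have hlim : r = ∑ a ∈ t, (mk fun k => pick (m₀ + k) (ρseq k) a) * w m₀ a := by
      ext d
      have h1 : ∀ a ∈ t, coeff d ((mk fun k => pick (m₀ + k) (ρseq k) a) * w m₀ a)
          = ∑ k ∈ Finset.range (d+1),
              coeff d (C (pick (m₀ + k) (ρseq k) a) * X ^ k * w m₀ a) :=
        fun a _ => coeff_mk_mul_eq_sum _ _ (Nat.lt_succ_self d)
      have h2 : coeff d (∑ a ∈ t, (mk fun k => pick (m₀ + k) (ρseq k) a) * w m₀ a)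
          = coeff d (r - ρseq (d+1)) := by
        rw [map_sum, Finset.sum_congr rfl h1, Finset.sum_comm, htel (d+1), map_sum]
        exact Finset.sum_congr rfl fun k _ => (map_sum _ _ _).symm
      have h3 : coeff d (ρseq (d+1)) = 0 := ((hOf _ _).mp (hinv (d+1))).2 d (by omega)
      rw [h2, map_sub, h3, sub_zero]
    rw [hlim]
    exact Ideal.sum_mem _ fun a ha => Ideal.mul_mem_left _ _ (hGmem m₀ le_rfl a (ht ▸ ha))
  -- Phase 1 : descending induction on the order
  have phase1 : ∀ f ∈ Ofilt 0, f ∈ Ideal.span G := by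
    refine Nat.decreasingInduction
      (motive := fun m _ => ∀ f ∈ Ofilt m, f ∈ Ideal.span G) ?_ phase2 (Nat.zero_le m₀)
    intro k hk IH f hf
    have hmemJ : coeff k f ∈ J k := Submodule.mem_map_of_mem hf
    rw [← hT k] at hmemJ
    obtain ⟨c, -, hc⟩ := Submodule.mem_span_finset.mp hmemJ
    have hf'mem : f - ∑ a ∈ T k, C (c a) * w k a ∈ Ofilt (k+1) := by
      rw [hOf]
      constructor
      · exact Submodule.sub_mem I ((hOf _ _).mp hf).1 (Ideal.sum_mem I fun a ha =>
          Ideal.mul_mem_left I _ ((hwspec k a (hTmem k a ha)).1))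
      · intro i hi
        have hterm : ∀ a ∈ T k, coeff i (C (c a) * w k a) = c a * coeff i (w k a) :=
          fun a _ => coeff_C_mul _ _ _
        rw [map_sub, map_sum, Finset.sum_congr rfl hterm]
        rcases Nat.lt_or_ge i k with hik | hik
        · rw [((hOf _ _).mp hf).2 i hik, Finset.sum_eq_zero, sub_zero]
          intro a ha
          rw [(hwspec k a (hTmem k a ha)).2.1 i hik, mul_zero]
        · have hik' : k = i := by omega
          subst hik'
          rw [sub_eq_zero, ← hc]
          exact Finset.sum_congr rfl fun a ha => by
            rw [smul_eq_mul, (hwspec k a (hTmem k a ha)).2.2]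
    have hsplit : f = (f - ∑ a ∈ T k, C (c a) * w k a) + ∑ a ∈ T k, C (c a) * w k a := by
      ring
    rw [hsplit]
    exact Ideal.add_mem _ (IH _ hf'mem)
      (Ideal.sum_mem _ fun a ha => Ideal.mul_mem_left _ _ (hGmem k (by omega) a ha))
  have hspan : Ideal.span G = I := by
    apply le_antisymm
    · exact Ideal.span_le.mpr hGI
    · intro f hf
      exact phase1 f ((hOf 0 f).mpr ⟨hf, fun i hi => absurd hi (Nat.not_lt_zero i)⟩)
  exact ⟨hGfin.toFinset, by rw [Set.Finite.coe_toFinset]; exact hspan⟩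

end HilbertBasis


section FGTransfer
variable {A : Type*} [CommRing A] {M : Type*} [AddCommGroup M] [Module A M]

/-- If `M` is killed by `K`, is finitely generated, and `A ⧸ K` is Noetherian,
then every `A`-submodule of `M` is finitely generated. -/
lemma Submodule.fg_of_isTorsionBySet (K : Ideal A) (hT : Module.IsTorsionBySet A M K)
    (hfin : Module.Finite A M) (hNoeth : IsNoetherianRing (A ⧸ K))
    (p : Submodule A M) : p.FG := by
  letI := hT.module
  haveI : IsScalarTower A (A ⧸ K) M := hT.isScalarTower
  haveI : Module.Finite (A ⧸ K) M := Module.Finite.of_restrictScalars_finite A (A ⧸ K) M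
  haveI : IsNoetherian (A ⧸ K) M := isNoetherian_of_isNoetherianRing_of_finite (A ⧸ K) M
  let toQ : Submodule A M → Submodule (A ⧸ K) M := fun q =>
    { carrier := q
      add_mem' := fun h1 h2 => q.add_mem h1 h2
      zero_mem' := q.zero_mem
      smul_mem' := by
        intro c x hx
        obtain ⟨a, rfl⟩ := Ideal.Quotient.mk_surjective c
        exact q.smul_mem a hx }
  obtain ⟨g, hg⟩ := IsNoetherian.noetherian (toQ p)
  refine ⟨g, le_antisymm ?_ ?_⟩
  · rw [Submodule.span_le]
    intro x hx
    have hx2 : x ∈ toQ p := hg ▸ Submodule.subset_span hx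
    exact hx2
  · intro x hx
    have hx' : x ∈ Submodule.span (A ⧸ K) (g : Set M) := by rw [hg]; exact hx
    have hle : Submodule.span (A ⧸ K) (g : Set M) ≤ toQ (Submodule.span A (g : Set M)) :=
      Submodule.span_le.mpr Submodule.subset_span
    exact hle hx'

end FGTransfer

section NilradicalChar

variable {R : Type*} [CommRing R]

lemma nilradical_powerSeries_eq (hfg : (nilradical R).FG) :
    nilradical (PowerSeries R) = (nilradical R).map (C) := by
  obtain ⟨s, hs⟩ := hfg
  apply le_antisymm
  · intro f hf
    have hco : ∀ j, coeff j f ∈ Submodule.span R (s : Set R) := by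
      intro j
      rw [Ideal.submodule_span_eq, hs]
      exact mem_nilradical.mpr (isNilpotent_coeff_of_isNilpotent (mem_nilradical.mp hf) j)
    choose c hcs hc using fun j => Submodule.mem_span_finset.mp (hco j)
    have hrepr : f = ∑ a ∈ s, C a * mk fun j => c j a := by
      ext j
      rw [map_sum]
      have h1 : ∀ a ∈ s, coeff j (C a * mk fun j => c j a) = c j a * a := by
        intro a _
        rw [coeff_C_mul, coeff_mk, mul_comm]
      rw [Finset.sum_congr rfl h1, ← hc j]
      simp [smul_eq_mul]
    rw [hrepr]
    refine Ideal.sum_mem _ fun a ha => Ideal.mul_mem_right _ _ (Ideal.mem_map_of_mem _ ?_)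
    rw [← hs]
    exact Submodule.subset_span ha
  · rw [Ideal.map_le_iff_le_comap]
    intro a ha
    exact mem_nilradical.mpr ((mem_nilradical.mp ha).map (C))

end NilradicalChar

set_option maxHeartbeats 1000000 in
theorem isNilStarNoetherianRing_powerSeries_iff (R : Type*) [CommRing R] :
    IsNilStarNoetherianRing R ↔ IsNilStarNoetherianRing (PowerSeries R) := by
  constructor
  · intro hR J hJ
    classical
    have hNfg : (nilradical R).FG := hR _ le_rfl
    have hNchar := nilradical_powerSeries_eq hNfg
    have hNoethN : IsNoetherian R ↥(nilradical R) := isNoetherian_submodule.mpr hR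
    obtain ⟨s, hs⟩ := hNfg
    have hsmem : ∀ a ∈ s, a ∈ nilradical R := fun a ha => by
      rw [← hs]; exact Ideal.subset_span ha
    set A := Submodule.annihilator (nilradical R) with hA
    set φ : R →ₗ[R] ({x // x ∈ s} → ↥(nilradical R)) :=
      LinearMap.pi (fun i => LinearMap.toSpanSingleton R _ ⟨i.1, hsmem i.1 i.2⟩) with hφ
    have hAker : A ≤ LinearMap.ker φ := by
      intro a ha
      rw [LinearMap.mem_ker]
      ext i
      have h0 := Submodule.mem_annihilator.mp ha i.1 (hsmem i.1 i.2)
      simpa [hφ, LinearMap.toSpanSingleton_apply] using h0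
    have hkerA : LinearMap.ker φ ≤ A := by
      intro a ha
      rw [Submodule.mem_annihilator]
      have h0 : ∀ b ∈ s, a • b = 0 := by
        intro b hb
        have h1 := congrFun (LinearMap.mem_ker.mp ha) ⟨b, hb⟩
        simpa [hφ, LinearMap.toSpanSingleton_apply, Subtype.ext_iff] using h1
      intro n hn
      rw [← hs, Ideal.submodule_span_eq.symm] at hn
      have hle : Submodule.span R (s : Set R) ≤ LinearMap.ker (LinearMap.lsmul R R a) :=
        Submodule.span_le.mpr (fun b hb => LinearMap.mem_ker.mpr (h0 b hb))
      exact LinearMap.mem_ker.mp (hle hn)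
    have hinj : Function.Injective (A.liftQ φ hAker) := by
      rw [← LinearMap.ker_eq_bot]
      exact Submodule.ker_liftQ_eq_bot _ _ _ hkerA
    have hNoethQ : IsNoetherian R (R ⧸ A) := isNoetherian_of_injective (A.liftQ φ hAker) hinj
    have hNoethRing : IsNoetherianRing (R ⧸ A) := by
      rw [isNoetherianRing_iff]
      exact isNoetherian_of_tower R hNoethQ
    haveI := hNoethRing
    haveI : IsNoetherianRing ((R ⧸ A)⟦X⟧) := PowerSeries.isNoetherianRing_of_isNoetherianRing
    set ρ : R⟦X⟧ →+* (R ⧸ A)⟦X⟧ := PowerSeries.map (Ideal.Quotient.mk A) with hρ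
    have hρsurj : Function.Surjective ρ := by
      intro g
      refine ⟨mk fun n => (Ideal.Quotient.mk_surjective (coeff n g)).choose, ?_⟩
      ext n
      rw [hρ, coeff_map, coeff_mk]
      exact (Ideal.Quotient.mk_surjective _).choose_spec
    set K := RingHom.ker ρ with hK
    have hKT : IsNoetherianRing (R⟦X⟧ ⧸ K) :=
      isNoetherianRing_of_ringEquiv _ (RingHom.quotientKerEquivOfSurjective hρsurj).symm
    set NX := (nilradical R).map (C) with hNX
    have hcoeffN : ∀ g ∈ NX, ∀ j, coeff j g ∈ nilradical R := by
      intro g hg j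
      rw [← hNchar] at hg
      exact mem_nilradical.mpr (isNilpotent_coeff_of_isNilpotent (mem_nilradical.mp hg) j)
    have hKcoeff : ∀ f ∈ K, ∀ j, coeff j f ∈ A := by
      intro f hf j
      have h1 : coeff j (ρ f) = 0 := by
        rw [RingHom.mem_ker.mp hf, map_zero]
      rw [hρ, coeff_map] at h1
      exact Ideal.Quotient.eq_zero_iff_mem.mp h1
    have hTor : Module.IsTorsionBySet R⟦X⟧ (↥NX) K := by
      intro x k
      refine Subtype.ext ?_
      show (k : R⟦X⟧) • (x : R⟦X⟧) = 0
      rw [smul_eq_mul]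
      ext j
      rw [coeff_mul, map_zero]
      apply Finset.sum_eq_zero
      intro p _
      have h1 : coeff p.1 (k : R⟦X⟧) ∈ A := hKcoeff _ k.2 p.1
      have h2 : coeff p.2 (x : R⟦X⟧) ∈ nilradical R := hcoeffN _ x.2 p.2
      have h3 := Submodule.mem_annihilator.mp h1 _ h2
      simpa using h3
    have hNXfg : NX.FG := by
      rw [hNX, ← hs, Ideal.map_span]
      exact ⟨s.image (C), by rw [Finset.coe_image]⟩
    have hfin : Module.Finite R⟦X⟧ ↥NX := Module.Finite.iff_fg.mpr hNXfg
    have hJNX : J ≤ NX := by rw [← hNchar]; exact hJ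
    have hpfg : (Submodule.comap NX.subtype J).FG :=
      Submodule.fg_of_isTorsionBySet K hTor hfin hKT _
    have hmap := Submodule.FG.map NX.subtype hpfg
    rwa [Submodule.map_comap_subtype, inf_eq_right.mpr hJNX] at hmap
  · intro hP I hI
    have hmap : (I.map (C)).FG := hP _ (by
      rw [Ideal.map_le_iff_le_comap]
      intro a ha
      exact mem_nilradical.mpr ((mem_nilradical.mp (hI ha)).map (C)))
    have h2 := hmap.map (constantCoeff)
    rwa [Ideal.map_map,
      show (constantCoeff).comp (C) = RingHom.id R from by ext a; simp,
      Ideal.map_id] at h2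
end

section
/- Let S be a countably infinite product of copies of a field k, and e an idempotent of S with exactly one nonzero coordinate. The trivial extension R = S(+)Se is Nil*-Noetherian but is neither reduced nor Noetherian. -/
set_option maxHeartbeats 1000000
set_option synthInstance.maxHeartbeats 1000000

open TrivSqZeroExt

section Aux

variable (k : Type*) [Field k]

lemma not_noeth_S : ¬ IsNoetherianRing (ℕ → k) := by
  intro h
  set J : Ideal (ℕ → k) :=
    { carrier := {f | (Function.support f).Finite}
      add_mem' := fun hf hg => ((hf.union hg).subset (Function.support_add _ _))
      zero_mem' := by simp
      smul_mem' := fun c f hf => hf.subset fun x hx => by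
        simp only [Function.mem_support, smul_eq_mul, Pi.mul_apply] at hx ⊢
        exact right_ne_zero_of_mul hx } with hJ
  obtain ⟨T, hT⟩ := (isNoetherianRing_iff_ideal_fg (ℕ → k)).mp h J
  have hfin : (⋃ f ∈ (T : Set (ℕ → k)), Function.support f).Finite := by
    apply Set.Finite.biUnion T.finite_toSet
    intro f hf
    exact (hT ▸ Ideal.subset_span hf : f ∈ J)
  obtain ⟨n, hn⟩ := hfin.infinite_compl.nonempty
  have hle : Ideal.span (T : Set (ℕ → k)) ≤ RingHom.ker (Pi.evalRingHom (fun _ => k) n) := by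
    apply Ideal.span_le.mpr
    intro f hf
    have : n ∉ Function.support f := fun hmem => hn (Set.mem_biUnion hf hmem)
    simpa [RingHom.mem_ker, Function.mem_support, not_not] using this
  have h1 : Pi.single n (1 : k) ∈ J := by
    show (Function.support (Pi.single n (1 : k))).Finite
    exact (Set.finite_singleton n).subset (Function.support_subset_iff'.mpr
      (fun x hx => Pi.single_eq_of_ne (by simpa using hx) 1))
  have := hle (hT ▸ h1)
  simp [RingHom.mem_ker] at this

local notation "SS" => (ℕ → k)
local notation "MM" => (Ideal.span {Pi.single 0 1} : Ideal (ℕ → k))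

/-- fst as a ring hom. -/
def myFstHom : TrivSqZeroExt (ℕ → k) (Ideal.span {Pi.single 0 1} : Ideal (ℕ → k)) →+* (ℕ → k) where
  toFun := fst
  map_one' := fst_one
  map_mul' := fst_mul
  map_zero' := fst_zero (M := MM)
  map_add' := fst_add

noncomputable def eM : (Ideal.span {Pi.single 0 1} : Ideal (ℕ → k)) :=
  ⟨Pi.single 0 1, Ideal.subset_span rfl⟩

lemma single_mem (c : k) : (Pi.single 0 c : ℕ → k) ∈ MM :=
  Ideal.mem_span_singleton'.mpr ⟨fun _ => c, by
    ext j; by_cases hj : j = 0 <;> simp [hj, Pi.single_apply]⟩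

lemma form_of_mem (I : Ideal (TrivSqZeroExt SS MM)) (hI : I ≤ nilradical _)
    {y : TrivSqZeroExt SS MM} (hy : y ∈ I) :
    ∃ c : k, y = inr ⟨Pi.single 0 c, single_mem k c⟩ := by
  have hfst : fst y = 0 := by
    have hnil : IsNilpotent y := mem_nilradical.mp (hI hy)
    exact (hnil.map (myFstHom k)).eq_zero
  obtain ⟨s, hs⟩ := Ideal.mem_span_singleton'.mp (snd y).2
  refine ⟨s 0, ?_⟩
  apply TrivSqZeroExt.ext
  · simpa using hfst
  · apply Subtype.ext
    show ((snd y : MM) : ℕ → k) = Pi.single 0 (s 0)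
    rw [← hs]
    ext j; by_cases hj : j = 0 <;> simp [hj, Pi.single_apply]

lemma not_reduced_R : ¬ IsReduced (TrivSqZeroExt (ℕ → k) (Ideal.span {Pi.single 0 1} : Ideal (ℕ → k))) := by
  intro hred
  have h2 : (inr (eM k) : TrivSqZeroExt (ℕ → k) (Ideal.span {Pi.single 0 1} : Ideal (ℕ → k))) ^ 2 = 0 := by
    rw [sq, inr_mul_inr]
  have h0 := hred.eq_zero _ ⟨2, h2⟩
  have hsnd := congrArg snd h0
  rw [snd_inr] at hsnd
  have h1 : (Pi.single 0 1 : ℕ → k) = 0 := congrArg Subtype.val hsnd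
  have := congrFun h1 0
  simp at this

lemma not_noeth_R : ¬ IsNoetherianRing (TrivSqZeroExt (ℕ → k) (Ideal.span {Pi.single 0 1} : Ideal (ℕ → k))) := by
  intro hnoeth
  exact not_noeth_S k (isNoetherianRing_of_surjective _ _
    (myFstHom k) (fun s => ⟨inl s, rfl⟩))

end Aux

set_option maxHeartbeats 1000000 in
set_option synthInstance.maxHeartbeats 1000000 in
theorem example_nilStarNoetherian_not_reduced_not_noetherian (k : Type*) [Field k] :
    IsNilStarNoetherianRing (TrivSqZeroExt (ℕ → k) (Ideal.span {Pi.single 0 1} : Ideal (ℕ → k))) ∧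
    ¬ IsReduced (TrivSqZeroExt (ℕ → k) (Ideal.span {Pi.single 0 1} : Ideal (ℕ → k))) ∧
    ¬ IsNoetherianRing (TrivSqZeroExt (ℕ → k) (Ideal.span {Pi.single 0 1} : Ideal (ℕ → k))) := by
  refine ⟨?_, ?_, ?_⟩
  · -- Nil*-Noetherian
    intro I hI
    by_cases hbot : I = ⊥
    · exact hbot ▸ ⟨∅, by simp⟩
    obtain ⟨x, hxI, hx0⟩ := Submodule.exists_mem_ne_zero_of_ne_bot hbot
    obtain ⟨c, hc⟩ := form_of_mem k I hI hxI
    have hcne : c ≠ 0 := by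
      rintro rfl
      apply hx0
      rw [hc]
      apply TrivSqZeroExt.ext <;> simp
    refine ⟨{inr (eM k)}, le_antisymm ?_ ?_⟩
    all_goals rw [Finset.coe_singleton]
    · rw [Ideal.span_le]
      rintro _ rfl
      have hx : inr (eM k) = inl (fun _ => c⁻¹) * x := by
        rw [hc, inl_mul_inr]
        congr 1
        apply Subtype.ext
        ext j
        simp only [eM, SetLike.val_smul, Pi.smul_apply, smul_eq_mul]
        by_cases hj : j = 0 <;>
          simp [hj, Pi.single_apply, inv_mul_cancel₀ hcne]
      exact hx ▸ Ideal.mul_mem_left I _ hxI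
    · intro y hy
      obtain ⟨d, hd⟩ := form_of_mem k I hI hy
      rw [hd]
      apply Ideal.mem_span_singleton'.mpr
      refine ⟨inl (fun _ => d), ?_⟩
      rw [inl_mul_inr]
      congr 1
      apply Subtype.ext
      ext j
      simp only [eM, SetLike.val_smul, Pi.smul_apply, smul_eq_mul]
      by_cases hj : j = 0 <;> simp [hj, Pi.single_apply]
  · exact not_reduced_R k
  · exact not_noeth_R k
end

section
/- Let S = k[x₁, x₂, ...] be a polynomial ring in countably many variables over a field k, and R = S/⟨x₁xᵢ : i ≥ 1⟩. Then R is Nil*-Noetherian (its nilradical is the principal ideal generated by the image of x₁), but R is not Nil*-coherent, since the annihilator of the image of x₁ is not finitely generated. -/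
/-- A commutative ring is Nil*-coherent if every finitely generated nil ideal is
finitely presented. -/
def IsNilStarCoherentRing (R : Type*) [CommRing R] : Prop :=
  ∀ I : Ideal R, I ≤ nilradical R → I.FG → Module.FinitePresentation R I

/-- The ideal ⟨x₁xᵢ : i ≥ 1⟩ of k[x₁, x₂, ...] (variables indexed by ℕ). -/
noncomputable def relIdeal16 (k : Type*) [Field k] : Ideal (MvPolynomial ℕ k) :=
  Ideal.span (Set.range fun i : ℕ => MvPolynomial.X 0 * MvPolynomial.X i)

/-- The ring R = k[x₁, x₂, ...]/⟨x₁xᵢ : i ≥ 1⟩. -/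
abbrev Ring16 (k : Type*) [Field k] : Type _ := MvPolynomial ℕ k ⧸ relIdeal16 k

namespace Ex16Aux

open MvPolynomial

variable {k : Type*} [Field k]

lemma gen_mem (i : ℕ) : (X 0 * X i : MvPolynomial ℕ k) ∈ relIdeal16 k :=
  Ideal.subset_span ⟨i, rfl⟩

lemma relIdeal16_eq : relIdeal16 k =
    Ideal.span ((fun s => monomial s (1:k)) ''
      Set.range (fun i : ℕ => Finsupp.single 0 1 + Finsupp.single i 1)) := by
  rw [relIdeal16, ← Set.range_comp]
  congr 1
  ext f
  constructor
  · rintro ⟨i, rfl⟩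
    exact ⟨i, by simp [X, monomial_mul]⟩
  · rintro ⟨i, rfl⟩
    exact ⟨i, by simp [X, monomial_mul]⟩

lemma X0_not_mem : (X 0 : MvPolynomial ℕ k) ∉ relIdeal16 k := by
  rw [relIdeal16_eq, mem_ideal_span_monomial_image]
  intro h
  obtain ⟨si, ⟨i, rfl⟩, hle⟩ := h (Finsupp.single 0 1) (by simp [support_X])
  rcases eq_or_ne i 0 with rfl | hi
  · have := Finsupp.le_def.mp hle 0
    simp at this
  · have := Finsupp.le_def.mp hle i
    simp [Finsupp.single_apply, hi] at this

/-- If `h` has zero constant term then `X 0 * h` lies in the relation ideal. -/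
lemma X0_mul_mem {h : MvPolynomial ℕ k} (hh : constantCoeff h = 0) :
    X 0 * h ∈ relIdeal16 k := by
  have hmem : h ∈ Ideal.span (X '' (Set.univ : Set ℕ) : Set (MvPolynomial ℕ k)) := by
    rw [mem_ideal_span_X_image]
    intro m hm
    rcases eq_or_ne m 0 with rfl | hm0
    · exact absurd (mem_support_iff.mp hm) (by simpa [constantCoeff_eq] using hh)
    · obtain ⟨i, hi⟩ := Finsupp.ne_iff.mp hm0
      exact ⟨i, trivial, by simpa using hi⟩
  refine Submodule.span_induction (p := fun x _ => X 0 * x ∈ relIdeal16 k) ?_ ?_ ?_ ?_ hmem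
  · rintro x ⟨i, -, rfl⟩; exact gen_mem i
  · simp
  · intro x y _ _ hx hy; rw [mul_add]; exact Ideal.add_mem _ hx hy
  · intro r x _ hx
    rw [smul_eq_mul, mul_left_comm]
    exact Ideal.mul_mem_left _ r hx

/-- The algebra map killing `X 0`. -/
noncomputable def psi : MvPolynomial ℕ k →ₐ[k] MvPolynomial ℕ k :=
  aeval (fun i => if i = 0 then 0 else X i)

lemma psi_rel {f : MvPolynomial ℕ k} (hf : f ∈ relIdeal16 k) : psi f = 0 := by
  have : relIdeal16 k ≤ RingHom.ker (psi (k := k)).toRingHom := by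
    rw [relIdeal16, Ideal.span_le]
    rintro x ⟨i, rfl⟩
    simp [RingHom.mem_ker, psi]
  exact this hf

lemma sub_psi_mem (f : MvPolynomial ℕ k) :
    f - psi f ∈ Ideal.span {(X 0 : MvPolynomial ℕ k)} := by
  induction f using MvPolynomial.induction_on with
  | C a => simp [psi]
  | add f g hf hg =>
      have : f + g - psi (f + g) = (f - psi f) + (g - psi g) := by
        rw [map_add]; ring
      rw [this]; exact Ideal.add_mem _ hf hg
  | mul_X f i hf =>
      rcases eq_or_ne i 0 with rfl | hi
      · rw [Ideal.mem_span_singleton]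
        have : psi (f * X 0) = 0 := by simp [psi]
        rw [this, sub_zero]
        exact ⟨f, mul_comm f (X 0)⟩
      · have : f * X i - psi (f * X i) = (f - psi f) * X i := by
          rw [map_mul, psi]; simp [hi, psi]; ring
        rw [this]
        exact Ideal.mul_mem_right _ _ hf

lemma mem_span_X0_of_pow {f : MvPolynomial ℕ k} {n : ℕ} (hf : f ^ n ∈ relIdeal16 k) :
    f ∈ Ideal.span {(X 0 : MvPolynomial ℕ k)} := by
  have h1 : (psi f) ^ n = 0 := by rw [← map_pow]; exact psi_rel hf
  have h2 : psi f = 0 := by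
    rcases eq_or_ne n 0 with rfl | hn
    · simp at h1
    · exact pow_eq_zero_iff hn |>.mp h1
  have := sub_psi_mem f
  rwa [h2, sub_zero] at this

lemma constCoeff_zero {f : MvPolynomial ℕ k} (hf : X 0 * f ∈ relIdeal16 k) :
    constantCoeff f = 0 := by
  by_contra hc
  set c := constantCoeff f with hcdef
  have h1 : X 0 * (f - C c) ∈ relIdeal16 k := X0_mul_mem (by simp [hcdef])
  have h2 : X 0 * C c ∈ relIdeal16 k := by
    have : X 0 * C c = X 0 * f - X 0 * (f - C c) := by ring
    rw [this]; exact Ideal.sub_mem _ hf h1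
  have h3 : (X 0 : MvPolynomial ℕ k) = C c⁻¹ * (X 0 * C c) := by
    rw [mul_comm (X 0) (C c), ← mul_assoc, ← C_mul, inv_mul_cancel₀ hc, C_1, one_mul]
  apply X0_not_mem (k := k)
  rw [h3]
  exact Ideal.mul_mem_left _ _ h2

lemma mk_X0_mul (f : MvPolynomial ℕ k) :
    Ideal.Quotient.mk (relIdeal16 k) (X 0 * f) =
      Ideal.Quotient.mk (relIdeal16 k) (C (constantCoeff f)) *
        Ideal.Quotient.mk (relIdeal16 k) (X 0) := by
  rw [← map_mul, Ideal.Quotient.eq]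
  have : X 0 * f - C (constantCoeff f) * X 0 = X 0 * (f - C (constantCoeff f)) := by ring
  rw [this]
  exact X0_mul_mem (by simp)

end Ex16Aux

set_option maxHeartbeats 2000000
set_option synthInstance.maxHeartbeats 1000000 in
theorem example_nilStarNoetherian_not_nilStarCoherent (k : Type*) [Field k] :
    nilradical (Ring16 k) =
      Ideal.span {Ideal.Quotient.mk (relIdeal16 k) (MvPolynomial.X 0)} ∧
    IsNilStarNoetherianRing (Ring16 k) ∧
    ¬ (Ideal.span {Ideal.Quotient.mk (relIdeal16 k) (MvPolynomial.X 0)}).annihilator.FG ∧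
    ¬ IsNilStarCoherentRing (Ring16 k) := by
  classical
  open MvPolynomial Ex16Aux in
  set mk : MvPolynomial ℕ k →+* Ring16 k := Ideal.Quotient.mk (relIdeal16 k) with hmk
  set g : Ring16 k := mk (MvPolynomial.X 0) with hgdef
  have hg2 : g * g = 0 := by
    rw [hgdef, ← map_mul]
    exact Ideal.Quotient.eq_zero_iff_mem.mpr (Ex16Aux.gen_mem 0)
  -- Part 1 : nilradical
  have hnil : nilradical (Ring16 k) = Ideal.span {g} := by
    apply le_antisymm
    · intro r hr
      obtain ⟨n, hn⟩ := mem_nilradical.mp hr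
      obtain ⟨f, rfl⟩ := Ideal.Quotient.mk_surjective r
      have hfn : f ^ n ∈ relIdeal16 k := by
        rw [← Ideal.Quotient.eq_zero_iff_mem, map_pow]
        exact hn
      obtain ⟨q, rfl⟩ := Ideal.mem_span_singleton.mp (Ex16Aux.mem_span_X0_of_pow hfn)
      exact Ideal.mem_span_singleton.mpr ⟨mk q, by rw [hgdef, ← map_mul]⟩
    · rw [Ideal.span_singleton_le_iff_mem]
      exact mem_nilradical.mpr ⟨2, by rw [pow_two]; exact hg2⟩
  -- Part 2 : Nil*-Noetherian
  have hNoeth : IsNilStarNoetherianRing (Ring16 k) := by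
    intro I hI
    rw [hnil] at hI
    rcases eq_or_ne I ⊥ with rfl | hne
    · exact ⟨∅, by simp⟩
    · obtain ⟨a, haI, ha0⟩ := Submodule.exists_mem_ne_zero_of_ne_bot hne
      obtain ⟨r, hr⟩ := Ideal.mem_span_singleton'.mp (hI haI)
      obtain ⟨f, rfl⟩ := Ideal.Quotient.mk_surjective r
      have ha : a = mk (MvPolynomial.C (MvPolynomial.constantCoeff f)) * g := by
        rw [← hr, hgdef, ← map_mul, mul_comm f (MvPolynomial.X 0), Ex16Aux.mk_X0_mul]
      have hc : MvPolynomial.constantCoeff f ≠ 0 := by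
        intro h
        apply ha0
        rw [ha, h, MvPolynomial.C_0, map_zero, zero_mul]
      have hgI : g ∈ I := by
        have hca : mk (MvPolynomial.C (MvPolynomial.constantCoeff f)⁻¹) * a = g := by
          rw [ha, ← mul_assoc, ← map_mul, ← MvPolynomial.C_mul,
            inv_mul_cancel₀ hc, MvPolynomial.C_1, map_one, one_mul]
        rw [← hca]
        exact Ideal.mul_mem_left _ _ haI
      have hIeq : I = Ideal.span {g} :=
        le_antisymm hI (by rwa [Ideal.span_singleton_le_iff_mem])
      rw [hIeq]
      exact ⟨{g}, by simp⟩
  -- elements X j are in the annihilator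
  have hannX : ∀ j : ℕ, mk (MvPolynomial.X j) ∈ (Ideal.span {g}).annihilator := by
    intro j
    refine (Submodule.mem_annihilator_span_singleton g _).mpr ?_
    rw [smul_eq_mul, hgdef, ← map_mul]
    exact Ideal.Quotient.eq_zero_iff_mem.mpr
      (by rw [mul_comm]; exact Ex16Aux.gen_mem j)
  -- Part 3 : annihilator not finitely generated
  have hannFG : ¬ (Ideal.span {g}).annihilator.FG := by
    rintro ⟨T, hT⟩
    choose F hF using fun t : Ring16 k => Ideal.Quotient.mk_surjective t
    set B : Finset ℕ := T.sup (fun t => (F t).vars) with hB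
    obtain ⟨j, hj⟩ := Infinite.exists_notMem_finset (insert 0 B)
    have hj0 : j ≠ 0 := fun h => hj (by simp [h])
    have hjB : ∀ t ∈ T, j ∉ (F t).vars := by
      intro t ht hv
      exact hj (Finset.mem_insert_of_mem ((Finset.le_sup (f := fun t => (F t).vars) ht) hv))
    set p : ℕ → k := fun i => if i = j then 1 else 0 with hp
    have hker : relIdeal16 k ≤ RingHom.ker (MvPolynomial.eval p) := by
      rw [relIdeal16, Ideal.span_le]
      rintro x ⟨i, rfl⟩
      have h0 : p 0 = 0 := by simp [hp, hj0.symm]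
      simp [RingHom.mem_ker, h0]
    let φ : Ring16 k →+* k := Ideal.Quotient.lift _ (MvPolynomial.eval p)
      (fun a ha => hker ha)
    have hφmk : ∀ f : MvPolynomial ℕ k, φ (mk f) = MvPolynomial.eval p f := by
      intro f; rfl
    have hT0 : ∀ t ∈ (T : Set (Ring16 k)), φ t = 0 := by
      intro t ht
      have h1 : t ∈ (Ideal.span {g}).annihilator := by
        rw [← hT]; exact Ideal.subset_span ht
      have h2 : MvPolynomial.X 0 * F t ∈ relIdeal16 k := by
        have := (Submodule.mem_annihilator_span_singleton g t).mp h1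
        rw [smul_eq_mul, ← hF t, hgdef, ← map_mul, mul_comm] at this
        exact Ideal.Quotient.eq_zero_iff_mem.mp this
      have h3 : MvPolynomial.constantCoeff (F t) = 0 := Ex16Aux.constCoeff_zero h2
      have h4 : MvPolynomial.eval p (F t) = MvPolynomial.constantCoeff (F t) :=
        MvPolynomial.eval₂Hom_eq_constantCoeff_of_vars (RingHom.id k)
          (fun i hi => by
            have hij : i ≠ j := fun h => hjB t ht (h ▸ hi)
            simp [hp, hij])
      rw [← hF t, hφmk, h4, h3]
    have hjker : φ (mk (MvPolynomial.X j)) = 0 := by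
      have hle : Ideal.span (T : Set (Ring16 k)) ≤ RingHom.ker φ :=
        Ideal.span_le.mpr (fun t ht => hT0 t ht)
      have : mk (MvPolynomial.X j) ∈ Ideal.span (T : Set (Ring16 k)) := by
        rw [hT]; exact hannX j
      exact hle this
    rw [hφmk, MvPolynomial.eval_X] at hjker
    simp [hp] at hjker
  -- Part 4 : not Nil*-coherent
  have hncoh : ¬ IsNilStarCoherentRing (Ring16 k) := by
    intro hcoh
    have hle : Ideal.span {g} ≤ nilradical (Ring16 k) := hnil ▸ le_rfl
    have hfg : (Ideal.span {g}).FG := ⟨{g}, by simp⟩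
    haveI hfp := hcoh _ hle hfg
    let gelt : Ideal.span {g} := ⟨g, Ideal.subset_span rfl⟩
    let l : Ring16 k →ₗ[Ring16 k] (Ideal.span {g}) :=
      LinearMap.toSpanSingleton _ _ gelt
    have hl : Function.Surjective l := by
      rintro ⟨x, hx⟩
      obtain ⟨r, hr⟩ := Ideal.mem_span_singleton'.mp hx
      refine ⟨r, Subtype.ext ?_⟩
      show r • g = x
      rw [smul_eq_mul, hr]
    have hkfg := Module.FinitePresentation.fg_ker l hl
    have hker_eq : LinearMap.ker l = (Ideal.span {g}).annihilator := by
      ext r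
      rw [LinearMap.mem_ker]
      rw [show (r ∈ (Ideal.span {g}).annihilator) ↔ r • g = 0 from
        Submodule.mem_annihilator_span_singleton g r]
      constructor
      · intro h
        have h2 := congrArg Subtype.val h
        rw [show ((l r : Ideal.span {g}) : Ring16 k) = r • g from rfl] at h2
        simpa using h2
      · intro h
        apply Subtype.ext
        rw [show ((l r : Ideal.span {g}) : Ring16 k) = r • g from rfl]
        simpa using h
    exact hannFG (hker_eq ▸ hkfg)
  exact ⟨hnil, hNoeth, hannFG, hncoh⟩
end

section
/- Let S = k[x₁, x₂, ...] be the polynomial ring over a field k in countably infinitely many variables, and R = S/⟨xᵢ² : i ≥ 1⟩. Then the nilradical of R is the ideal generated by the images of all xᵢ, and it is not finitely generated; hence R is not Nil*-Noetherian. -/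
open MvPolynomial Ideal DualNumber

/-- The ideal ⟨xᵢ² : i ≥ 1⟩ of k[x₁, x₂, ...] (variables indexed by ℕ). -/
noncomputable def relIdeal17 (k : Type*) [Field k] : Ideal (MvPolynomial ℕ k) :=
  Ideal.span (Set.range fun i : ℕ => MvPolynomial.X i ^ 2)

/-- The ring R = k[x₁, x₂, ...]/⟨xᵢ² : i ≥ 1⟩. -/
abbrev Ring17 (k : Type*) [Field k] : Type _ := MvPolynomial ℕ k ⧸ relIdeal17 k

lemma span_range_X_eq_ker (k : Type*) [Field k] :
    Ideal.span (Set.range (X : ℕ → MvPolynomial ℕ k)) =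
      RingHom.ker (constantCoeff : MvPolynomial ℕ k →+* k) := by
  ext p
  rw [← Set.image_univ, mem_ideal_span_X_image, RingHom.mem_ker]
  constructor
  · intro h
    by_contra hc
    have h0 : (0 : ℕ →₀ ℕ) ∈ p.support := by
      rw [MvPolynomial.mem_support_iff]; exact hc
    obtain ⟨i, -, hi⟩ := h 0 h0
    exact hi rfl
  · intro h m hm
    by_contra hc
    push_neg at hc
    have : m = 0 := Finsupp.ext fun i => by
      have := hc i (Set.mem_univ i); simpa using this
    rw [this, MvPolynomial.mem_support_iff] at hm
    exact hm h

lemma radical_relIdeal (k : Type*) [Field k] :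
    (relIdeal17 k).radical = Ideal.span (Set.range (X : ℕ → MvPolynomial ℕ k)) := by
  have hprime : (Ideal.span (Set.range (X : ℕ → MvPolynomial ℕ k))).IsPrime := by
    rw [span_range_X_eq_ker]
    exact RingHom.ker_isPrime _
  apply le_antisymm
  · rw [hprime.radical_le_iff, relIdeal17, Ideal.span_le]
    rintro _ ⟨i, rfl⟩
    exact Ideal.pow_mem_of_mem _ (Ideal.subset_span (Set.mem_range_self i)) 2 (by norm_num)
  · rw [Ideal.span_le]
    rintro _ ⟨i, rfl⟩
    exact Ideal.mem_radical_of_pow_mem (m := 2)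
      (Ideal.le_radical (Ideal.subset_span (Set.mem_range_self i)))

lemma nilradical_Ring17 (k : Type*) [Field k] :
    nilradical (Ring17 k) =
      Ideal.span (Set.range fun i : ℕ =>
        Ideal.Quotient.mk (relIdeal17 k) (MvPolynomial.X i)) := by
  rw [nilradical, Ideal.zero_eq_bot, ← Ideal.map_quotient_self (relIdeal17 k),
    ← Ideal.map_radical_of_surjective Ideal.Quotient.mk_surjective
      Ideal.mk_ker.le,
    radical_relIdeal, Ideal.map_span, ← Set.range_comp]
  rfl

lemma not_fg (k : Type*) [Field k] : ¬ (nilradical (Ring17 k)).FG := by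
  rintro ⟨s, hs⟩
  -- lift each generator to a polynomial
  have lift : ∀ a : Ring17 k, ∃ p : MvPolynomial ℕ k,
      Ideal.Quotient.mk (relIdeal17 k) p = a := Ideal.Quotient.mk_surjective
  classical
  set F : Ring17 k → MvPolynomial ℕ k := fun a => (lift a).choose with hF
  have hFspec : ∀ a, Ideal.Quotient.mk (relIdeal17 k) (F a) = a :=
    fun a => (lift a).choose_spec
  set T : Finset ℕ := s.biUnion (fun a => (F a).vars) with hT
  set n : ℕ := T.sup id + 1 with hn
  have hnT : n ∉ T := by
    intro hmem
    have h2 : n ≤ T.sup id := by simpa using Finset.le_sup (f := id) hmem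
    omega
  -- the evaluation map
  set g : ℕ → DualNumber k := fun i => if i = n then ε else 0 with hg
  have hgen : ∀ q ∈ Set.range fun i : ℕ => (MvPolynomial.X i : MvPolynomial ℕ k) ^ 2,
      (aeval g) q = 0 := by
    rintro _ ⟨i, rfl⟩
    simp only [map_pow, aeval_X, hg]
    by_cases hi : i = n
    · simp [hi, pow_two, eps_mul_eps]
    · simp [hi]
  have hker : relIdeal17 k ≤ RingHom.ker ((aeval g : MvPolynomial ℕ k →ₐ[k] DualNumber k) : MvPolynomial ℕ k →+* DualNumber k) := by
    rw [relIdeal17, Ideal.span_le]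
    intro q hq
    exact hgen q hq
  set ψ : Ring17 k →+* DualNumber k := Ideal.Quotient.lift (relIdeal17 k) _ hker with hψ
  have hψmk : ∀ p : MvPolynomial ℕ k,
      ψ (Ideal.Quotient.mk (relIdeal17 k) p) = aeval g p := fun p => rfl
  -- ψ vanishes on all generators in s
  have hψs : ∀ a ∈ s, ψ a = 0 := by
    intro a ha
    have hnil : a ∈ nilradical (Ring17 k) := by
      rw [← hs]; exact Ideal.subset_span ha
    have hrad : F a ∈ (relIdeal17 k).radical := by
      have h2 : F a ∈ Ideal.comap (Ideal.Quotient.mk (relIdeal17 k))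
          (nilradical (Ring17 k)) := by
        rw [Ideal.mem_comap, hFspec a]; exact hnil
      rwa [nilradical, Ideal.zero_eq_bot, Ideal.comap_radical, ← RingHom.ker_eq_comap_bot,
        Ideal.mk_ker] at h2
    rw [radical_relIdeal, span_range_X_eq_ker, RingHom.mem_ker] at hrad
    have hvars : ∀ i ∈ (F a).vars, g i = 0 := by
      intro i hi
      have : i ≠ n := by
        intro h
        apply hnT
        rw [hT]
        exact Finset.mem_biUnion.2 ⟨a, ha, h ▸ hi⟩
      simp [hg, this]
    rw [← hFspec a, hψmk, aeval_eq_constantCoeff_of_vars hvars, hrad, map_zero]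
  -- but X n maps into nilradical, and ψ (mk (X n)) = ε ≠ 0
  have hXn : Ideal.Quotient.mk (relIdeal17 k) (MvPolynomial.X n) ∈ nilradical (Ring17 k) := by
    rw [nilradical_Ring17 k]
    exact Ideal.subset_span ⟨n, rfl⟩
  have hker2 : nilradical (Ring17 k) ≤ RingHom.ker ψ := by
    rw [← hs, Ideal.span_le]
    intro a ha
    exact hψs a ha
  have h0 : ψ (Ideal.Quotient.mk (relIdeal17 k) (MvPolynomial.X n)) = 0 := hker2 hXn
  rw [hψmk, aeval_X] at h0
  simp only [hg, if_pos rfl] at h0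
  have : (ε : DualNumber k).snd = (0 : DualNumber k).snd := by rw [h0]
  rw [snd_eps] at this
  simp at this

theorem example_quotient_not_nilStarNoetherian (k : Type*) [Field k] :
    nilradical (Ring17 k) =
      Ideal.span (Set.range fun i : ℕ =>
        Ideal.Quotient.mk (relIdeal17 k) (MvPolynomial.X i)) ∧
    ¬ (nilradical (Ring17 k)).FG ∧
    ¬ IsNilStarNoetherianRing (Ring17 k) := by
  refine ⟨nilradical_Ring17 k, not_fg k, ?_⟩
  intro h
  exact not_fg k (h _ le_rfl)
end

section
/- A nonzero nil ideal of a commutative ring R is never projective as an R-module. -/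
lemma nilp_apply {R : Type*} [CommRing R] {I : Ideal R} (f : I →ₗ[R] R) (y : I)
    (hy : IsNilpotent (y : R)) : IsNilpotent (f y) := by
  obtain ⟨n, hn⟩ := hy
  refine ⟨n, ?_⟩
  have key : ∀ k, k ≤ n → (f y) ^ k * (y : R) ^ (n - k) = 0 := by
    intro k
    induction k with
    | zero => intro _; simpa using hn
    | succ k ih =>
      intro hk
      have hk' : k ≤ n := Nat.le_of_succ_le hk
      have h1 := ih hk'
      set z : I := ((y : R) ^ (n - k - 1)) • y with hz
      have hnk : n - k - 1 + 1 = n - k := by omega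
      have hzc : (z : R) = (y : R) ^ (n - k) := by
        rw [hz, Submodule.coe_smul, smul_eq_mul, ← pow_succ, hnk]
      have h2 : ((f y) ^ k • z : I) = 0 := by
        have : (((f y) ^ k • z : I) : R) = 0 := by
          rw [Submodule.coe_smul, smul_eq_mul, hzc, h1]
        exact Subtype.ext this
      have h3 : (f y) ^ k * f z = 0 := by
        have := map_smul f ((f y) ^ k) z
        rw [h2, map_zero] at this
        rw [← smul_eq_mul, ← this]
      have h4 : f z = (y : R) ^ (n - k - 1) * f y := by
        rw [hz, map_smul, smul_eq_mul]
      have hsub : n - (k + 1) = n - k - 1 := by omega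
      calc (f y) ^ (k + 1) * (y : R) ^ (n - (k + 1))
          = (f y) ^ k * ((y : R) ^ (n - k - 1) * f y) := by rw [hsub]; ring
        _ = (f y) ^ k * f z := by rw [h4]
        _ = 0 := h3
  simpa using key n le_rfl

lemma span_finset_nilpotent {R : Type*} [CommRing R] (s : Finset R)
    (h : ∀ x ∈ s, IsNilpotent x) : IsNilpotent (Ideal.span (s : Set R)) := by
  classical
  induction s using Finset.induction with
  | empty => exact ⟨1, by simp⟩
  | @insert a s ha ih =>
    rw [Finset.coe_insert, Ideal.span_insert, ← Ideal.add_eq_sup]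
    apply Commute.isNilpotent_add (Commute.all _ _)
    · obtain ⟨n, hn⟩ := h a (Finset.mem_insert_self a s)
      exact ⟨n, by rw [Ideal.span_singleton_pow, hn]; simp⟩
    · exact ih fun x hx => h x (Finset.mem_insert_of_mem hx)

theorem nil_ideal_not_projective {R : Type*} [CommRing R] (I : Ideal R)
    (hne : I ≠ ⊥) (hnil : I ≤ nilradical R) : ¬ Module.Projective R I := by
  classical
  intro hp
  obtain ⟨s, hs⟩ := (Module.projective_def').mp hp
  obtain ⟨x, hxI, hx0⟩ := (Submodule.ne_bot_iff I).mp hne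
  set x' : I := ⟨x, hxI⟩ with hx'
  set a : I →₀ R := s x' with ha
  set T : Finset I := a.support with hT
  have hxlc : (Finsupp.linearCombination R (id : I → I)) a = x' := by
    have := congrArg (fun g => g x') hs
    simpa using this
  have hxsum : x' = ∑ e ∈ T, a e • e := by
    rw [← hxlc, Finsupp.linearCombination_apply, Finsupp.sum]; simp; rfl
  have hse : a = ∑ e' ∈ T, a e' • s e' := by
    conv_lhs => rw [ha, hxsum]
    rw [map_sum]
    simp [map_smul]
  have hkey : ∀ e : I, a e = ∑ e' ∈ T, a e' * (s e') e := by
    intro e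
    conv_lhs => rw [hse]
    rw [Finsupp.finset_sum_apply]
    simp [Finsupp.smul_apply, smul_eq_mul]
  set G : Finset R := (T ×ˢ T).image (fun p : I × I => (s p.2) p.1) with hG
  set N : Ideal R := Ideal.span (G : Set R) with hN
  have hGnil : ∀ r ∈ G, IsNilpotent r := by
    intro r hr
    rw [hG, Finset.mem_image] at hr
    obtain ⟨p, hp', rfl⟩ := hr
    have hnp : IsNilpotent ((p.2 : R)) := hnil p.2.2
    exact nilp_apply ((Finsupp.lapply p.1).comp s) p.2 hnp
  obtain ⟨k, hk⟩ := span_finset_nilpotent G hGnil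
  have hmem : ∀ m, ∀ e ∈ T, a e ∈ N ^ m := by
    intro m
    induction m with
    | zero => intro e _; rw [pow_zero, Ideal.one_eq_top]; exact Submodule.mem_top
    | succ m ih =>
      intro e he
      rw [hkey e, pow_succ]
      apply Ideal.sum_mem
      intro e' he'
      apply Ideal.mul_mem_mul (ih e' he')
      apply Ideal.subset_span
      rw [hG]
      exact Finset.mem_image.mpr ⟨(e, e'), Finset.mk_mem_product he he', rfl⟩
  have haz : a = 0 := by
    ext e
    by_cases he : e ∈ T
    · have h := hmem k e he
      rw [hk] at h
      simpa using h
    · simpa using Finsupp.notMem_support_iff.mp he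
  have : x' = 0 := by rw [haz] at hxlc; simpa using hxlc.symm
  exact hx0 (by simpa [hx'] using congrArg (Subtype.val) this)
end

section
/- For a commutative ring R, the following are equivalent: (1) R is reduced; (2) every R-module M satisfies Ext¹_R(R/I, M) = 0 for every nil ideal I; (3) every R-module M satisfies Ext¹_R(R/I, M) = 0 for every finitely generated nil ideal I. -/
open CategoryTheory

universe u

section Aux

variable {R : Type u} [CommRing R]

lemma subsingletonOfIsZero {M : ModuleCat.{u} R} (h : Limits.IsZero M) :
    Subsingleton M := by
  refine ⟨fun a b => ?_⟩
  have h1 : (𝟙 M : M ⟶ M) = 0 := h.eq_of_src _ _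
  calc a = (𝟙 M : M ⟶ M) a := rfl
    _ = (0 : M ⟶ M) a := by rw [h1]
    _ = (0 : M ⟶ M) b := rfl
    _ = (𝟙 M : M ⟶ M) b := by rw [h1]
    _ = b := rfl

lemma extOneSubsingletonOfProjective (X : ModuleCat.{u} R) [Projective X]
    (Y : ModuleCat.{u} R) :
    Subsingleton (((Ext R (ModuleCat.{u} R) 1).obj (Opposite.op X)).obj Y) :=
  subsingletonOfIsZero (isZero_Ext_succ_of_projective X Y 0)

lemma projectiveOfExtOne (X : ModuleCat.{u} R)
    (h : ∀ Y : ModuleCat.{u} R,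
      Subsingleton (((Ext R (ModuleCat.{u} R) 1).obj (Opposite.op X)).obj Y)) :
    Module.Projective R X := by
  have P : ProjectiveResolution X := ProjectiveResolution.of X
  let π₀ : P.complex.X 0 ⟶ X := P.π.f 0
  let d10 : P.complex.X 1 ⟶ P.complex.X 0 := P.complex.d 1 0
  have hd : ∀ y, π₀ (d10 y) = 0 := fun y => by
    have h0 := P.complex_d_comp_π_f_zero
    show (P.complex.d 1 0 ≫ P.π.f 0) y = 0
    rw [h0]; rfl
  let Kmod : Submodule R (P.complex.X 0) := LinearMap.ker π₀.hom
  let Y : ModuleCat.{u} R := ModuleCat.of R Kmod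
  let k : P.complex.X 1 ⟶ Y :=
    ModuleCat.ofHom (LinearMap.codRestrict Kmod d10.hom (fun y => LinearMap.mem_ker.2 (hd y)))
  -- exactness of the Hom complex at 1
  haveI := h Y
  have h1 : Limits.IsZero (((Ext R (ModuleCat.{u} R) 1).obj (Opposite.op X)).obj Y) :=
    ModuleCat.isZero_of_subsingleton _
  have h2 : Limits.IsZero ((P.complex.linearYonedaObj R Y).homology 1) :=
    h1.of_iso (P.isoExt 1 Y).symm
  have h3 : (P.complex.linearYonedaObj R Y).ExactAt 1 :=
    (HomologicalComplex.exactAt_iff_isZero_homology _ _).2 h2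
  have h4 := ((P.complex.linearYonedaObj R Y).exactAt_iff' 0 1 2 (by simp) (by simp)).1 h3
  rw [ShortComplex.moduleCat_exact_iff] at h4
  -- k is a cocycle
  have hk : ((P.complex.linearYonedaObj R Y).sc' 0 1 2).g k = 0 := by
    show ((P.complex.linearYonedaObj R Y).d 1 2) k = 0
    rw [ChainComplex.linearYonedaObj_d]
    show P.complex.d 2 1 ≫ k = 0
    ext y
    show d10 ((P.complex.d 2 1) y) = 0
    calc d10 ((P.complex.d 2 1) y) = (P.complex.d 2 1 ≫ P.complex.d 1 0) y := rfl
      _ = 0 := by rw [P.complex.d_comp_d]; rfl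
  obtain ⟨w1, hw⟩ := h4 k hk
  let w : P.complex.X 0 ⟶ Y := w1
  have hw : ((P.complex.linearYonedaObj R Y).d 0 1) w = k := hw
  have hw' : P.complex.d 1 0 ≫ w = k := by
    have : ((P.complex.linearYonedaObj R Y).d 0 1) w = k := hw
    rwa [ChainComplex.linearYonedaObj_d] at this
  -- w restricted to Kmod is the identity
  have hg : ∀ m : P.complex.X 0, π₀ m = 0 → Kmod.subtype (w m) = m := by
    intro m hm
    have hex := P.exact₀
    rw [ShortComplex.moduleCat_exact_iff] at hex
    obtain ⟨y, hy⟩ := hex m hm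
    have hy' : d10 y = m := hy
    have hwk : w (d10 y) = k y := congrArg (fun f => f y) hw'
    calc Kmod.subtype (w m) = Kmod.subtype (w (d10 y)) := by rw [hy']
      _ = Kmod.subtype (k y) := by rw [hwk]
      _ = d10 y := rfl
      _ = m := hy'
  -- π₀ is surjective
  have hsurj : Function.Surjective π₀.hom :=
    (ModuleCat.epi_iff_surjective (P.π.f 0)).1 inferInstance
  -- build the section
  let p' : P.complex.X 0 →ₗ[R] P.complex.X 0 :=
    LinearMap.id - Kmod.subtype ∘ₗ w.hom
  have hker : LinearMap.ker π₀.hom ≤ LinearMap.ker p' := by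
    intro m hm
    have hm' : π₀ m = 0 := hm
    show m - Kmod.subtype (w m) = 0
    rw [hg m hm', sub_self]
  let e := LinearMap.quotKerEquivOfSurjective π₀.hom hsurj
  let σ : X →ₗ[R] P.complex.X 0 :=
    (Submodule.liftQ (LinearMap.ker π₀.hom) p' hker) ∘ₗ e.symm.toLinearMap
  have hσ : ∀ x : X, π₀ (σ x) = x := by
    intro x
    obtain ⟨v, hv⟩ := hsurj x
    have he : e (Submodule.Quotient.mk v) = π₀ v := rfl
    have hes : e.symm x = Submodule.Quotient.mk v := by
      rw [← hv, ← he, LinearEquiv.symm_apply_apply]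
    show π₀ ((Submodule.liftQ _ p' hker) (e.symm x)) = x
    rw [hes, Submodule.liftQ_apply]
    show π₀ (v - Kmod.subtype (w v)) = x
    rw [map_sub]
    have h0 : π₀ (Kmod.subtype (w v)) = 0 := Submodule.coe_mem (w v)
    rw [h0, sub_zero, hv]
  -- conclude projectivity
  haveI : Module.Projective R (P.complex.X 0) :=
    (IsProjective.iff_projective _).mpr (P.projective 0)
  exact Module.Projective.of_split σ π₀.hom (by ext x; exact hσ x)

lemma idealEqBotOfProjective (I : Ideal R) (hnil : I ≤ nilradical R)
    (hp : Module.Projective R (R ⧸ I)) : I = ⊥ := by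
  obtain ⟨σ, hσ⟩ := Module.projective_lifting_property I.mkQ LinearMap.id
    (Submodule.mkQ_surjective I)
  set t := σ 1 with ht_def
  have ht : Submodule.Quotient.mk t = (1 : R ⧸ I) := by
    have := congrArg (fun f => f (1 : R ⧸ I)) hσ
    simpa using this
  have h1t : (1 : R) - t ∈ I := by
    rw [← Submodule.Quotient.eq]
    exact ht.symm
  have hat : ∀ a ∈ I, a * t = 0 := by
    intro a ha
    have h0 : (Submodule.Quotient.mk a : R ⧸ I) = 0 := (Submodule.Quotient.mk_eq_zero _).2 ha
    have h1 : σ (Submodule.Quotient.mk a) = 0 := by rw [h0, map_zero]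
    calc a * t = a • t := rfl
      _ = σ (a • (1 : R ⧸ I)) := by rw [map_smul]
      _ = σ (Submodule.Quotient.mk a) := by
          congr 1
          have : (a • (1 : R ⧸ I)) = Submodule.Quotient.mk (a • (1 : R)) :=
            (Submodule.Quotient.mk_smul I a 1).symm
          rw [this, smul_eq_mul, mul_one]
      _ = 0 := h1
  rw [eq_bot_iff]
  intro a ha
  obtain ⟨n, hn⟩ := mem_nilradical.mp (hnil h1t)
  have key : ∀ m : ℕ, a * (1 - t) ^ m = a := by
    intro m
    induction m with
    | zero => simp
    | succ m ih =>
      have hstep : a * (1 - t) = a := by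
        rw [mul_sub, mul_one, hat a ha, sub_zero]
      calc a * (1 - t) ^ (m + 1) = (a * (1 - t)) * (1 - t) ^ m := by ring
        _ = a * (1 - t) ^ m := by rw [hstep]
        _ = a := ih
  have : a = 0 := by
    have := key n
    rw [hn, mul_zero] at this
    exact this.symm
  simp [this]

end Aux

theorem reduced_iff_all_modules_nilStarInjective (R : Type u) [CommRing R] :
    (IsReduced R ↔
      ∀ (M : Type u) [AddCommGroup M] [Module R M], ∀ I : Ideal R, I ≤ nilradical R →
        Subsingleton (((Ext R (ModuleCat.{u} R) 1).obj
          (Opposite.op (ModuleCat.of R (R ⧸ I)))).obj (ModuleCat.of R M))) ∧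
    ((∀ (M : Type u) [AddCommGroup M] [Module R M], ∀ I : Ideal R, I ≤ nilradical R →
        Subsingleton (((Ext R (ModuleCat.{u} R) 1).obj
          (Opposite.op (ModuleCat.of R (R ⧸ I)))).obj (ModuleCat.of R M))) ↔
      (∀ (M : Type u) [AddCommGroup M] [Module R M], ∀ I : Ideal R, I ≤ nilradical R → I.FG →
        Subsingleton (((Ext R (ModuleCat.{u} R) 1).obj
          (Opposite.op (ModuleCat.of R (R ⧸ I)))).obj (ModuleCat.of R M)))) := by
  -- forward direction of (1) ↔ (2)
  have fwd : IsReduced R →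
      ∀ (M : Type u) [AddCommGroup M] [Module R M], ∀ I : Ideal R, I ≤ nilradical R →
        Subsingleton (((Ext R (ModuleCat.{u} R) 1).obj
          (Opposite.op (ModuleCat.of R (R ⧸ I)))).obj (ModuleCat.of R M)) := by
    intro hred M _ _ I hI
    haveI : IsReduced R := hred
    have hI0 : I = ⊥ := le_bot_iff.mp
      (by rw [← Submodule.zero_eq_bot, ← nilradical_eq_zero R]; exact hI)
    subst hI0
    have hproj : Module.Projective R (R ⧸ (⊥ : Ideal R)) := by
      let eqv := Submodule.quotEquivOfEqBot (⊥ : Ideal R) rfl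
      exact Module.Projective.of_split eqv.toLinearMap eqv.symm.toLinearMap (by ext; simp)
    haveI : Projective (ModuleCat.of R (R ⧸ (⊥ : Ideal R))) :=
      (IsProjective.iff_projective _).mp hproj
    exact extOneSubsingletonOfProjective _ _
  -- from the FG version, deduce I = ⊥ for an FG nil ideal
  have key : ∀ (hyp : ∀ (M : Type u) [AddCommGroup M] [Module R M], ∀ I : Ideal R,
      I ≤ nilradical R →
        Subsingleton (((Ext R (ModuleCat.{u} R) 1).obj
          (Opposite.op (ModuleCat.of R (R ⧸ I)))).obj (ModuleCat.of R M)))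
      (I : Ideal R), I ≤ nilradical R → I = ⊥ := by
    intro hyp I hI
    have hproj : Module.Projective R (R ⧸ I) := by
      have := projectiveOfExtOne (R := R) (ModuleCat.of R (R ⧸ I)) (fun Y => hyp Y I hI)
      exact this
    exact idealEqBotOfProjective I hI hproj
  have keyFG : ∀ (hyp : ∀ (M : Type u) [AddCommGroup M] [Module R M], ∀ I : Ideal R,
      I ≤ nilradical R → I.FG →
        Subsingleton (((Ext R (ModuleCat.{u} R) 1).obj
          (Opposite.op (ModuleCat.of R (R ⧸ I)))).obj (ModuleCat.of R M)))
      (I : Ideal R), I ≤ nilradical R → I.FG → I = ⊥ := by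
    intro hyp I hI hFG
    have hproj : Module.Projective R (R ⧸ I) := by
      have := projectiveOfExtOne (R := R) (ModuleCat.of R (R ⧸ I)) (fun Y => hyp Y I hI hFG)
      exact this
    exact idealEqBotOfProjective I hI hproj
  constructor
  · constructor
    · exact fwd
    · intro hyp
      have h0 : nilradical R = ⊥ := key hyp (nilradical R) le_rfl
      refine ⟨fun x hx => ?_⟩
      have : x ∈ nilradical R := mem_nilradical.2 hx
      rw [h0] at this
      simpa using this
  · constructor
    · intro hyp M _ _ I hI _
      exact hyp M I hI
    · intro hyp
      have hred : IsReduced R := by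
        refine ⟨fun x hx => ?_⟩
        have hle : Ideal.span {x} ≤ nilradical R := by
          rw [Ideal.span_le, Set.singleton_subset_iff]
          exact mem_nilradical.2 hx
        have hFG : (Ideal.span {x}).FG := ⟨{x}, by simp⟩
        have h0 : Ideal.span {x} = ⊥ := keyFG hyp _ hle hFG
        exact Ideal.span_singleton_eq_bot.mp h0
      exact fwd hred
end
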